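/- Let G and H be finite simple graphs and let φ : V(H) → V(G) be an injective map such that the superposition F = G ⊕_φ H is connected. Let X be a vertex cover of H with |X| = t ≥ 1. Then there exists a set Y ⊆ V(H) \ X with |Y| ≤ 2(t−1) such that, setting H' = H[X ∪ Y] (the subgraph of H induced by X ∪ Y) and ψ = φ restricted to X ∪ Y, all vertices of ψ(X ∪ Y) lie in the same connected component of the superposition F' = G ⊕_ψ H'. -/

import Mathlib

open SimpleGraph

/-- The superposition `G ⊕_φ H` of `G` and `H` with respect to an injective map
`φ : V(H) ↪ V(G)`: vertices `u, v` are adjacent iff `uv ∈ E(G)`, or both are in the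
image of `φ` and their preimages are adjacent in `H`. -/
def superpose {α β : Type*} (G : SimpleGraph α) (H : SimpleGraph β) (φ : β ↪ α) :
    SimpleGraph α :=
  G ⊔ SimpleGraph.map φ H

/-- The subgraph of `H` consisting of the edges of the induced subgraph `H[s]`
(on the same vertex type). -/
def restrict {β : Type*} (H : SimpleGraph β) (s : Set β) : SimpleGraph β where
  Adj x y := x ∈ s ∧ y ∈ s ∧ H.Adj x y
  symm := ⟨fun x y h => ⟨h.2.1, h.1, h.2.2.symm⟩⟩
  loopless := ⟨fun x h => H.irrefl h.2.2⟩

section Aux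

variable {α β : Type*} {G : SimpleGraph α} {H : SimpleGraph β} {φ : β ↪ α}

lemma superpose_adj {u v : α} :
    (superpose G H φ).Adj u v ↔ G.Adj u v ∨ ∃ a b, H.Adj a b ∧ φ a = u ∧ φ b = v := by
  simp [superpose, map_adj]

def FS (G : SimpleGraph α) (H : SimpleGraph β) (φ : β ↪ α) (s : Finset β) : SimpleGraph α :=
  superpose G (restrict H ↑s) φ

lemma FS_adj_of_G {s : Finset β} {u v : α} (h : G.Adj u v) :
    (FS G H φ s).Adj u v := superpose_adj.2 (Or.inl h)

lemma FS_adj_of_H {s : Finset β} {a b : β} (ha : a ∈ s) (hb : b ∈ s)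
    (hab : H.Adj a b) : (FS G H φ s).Adj (φ a) (φ b) :=
  superpose_adj.2 (Or.inr ⟨a, b, ⟨by exact_mod_cast ha, by exact_mod_cast hb, hab⟩, rfl, rfl⟩)

lemma FS_le {s t : Finset β} (hst : s ⊆ t) :
    FS G H φ s ≤ FS G H φ t := by
  intro u v huv
  rcases superpose_adj.1 huv with h | ⟨a, b, hab, rfl, rfl⟩
  · exact superpose_adj.2 (Or.inl h)
  · exact FS_adj_of_H (hst (by exact_mod_cast hab.1)) (hst (by exact_mod_cast hab.2.1)) hab.2.2

lemma FS_reach_mono {s t : Finset β} (hst : s ⊆ t) {x y : α}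
    (h : (FS G H φ s).Reachable x y) : (FS G H φ t).Reachable x y :=
  h.mono (FS_le hst)

variable [DecidableEq β]

/-- The goal of a merge step: some so-far-unreached cover vertex `y` becomes
reachable after adding at most 2 new vertices `Z`. -/
def MergeGoal (G : SimpleGraph α) (H : SimpleGraph β) (φ : β ↪ α)
    (X Y : Finset β) (x₀ : β) : Prop :=
  ∃ y ∈ X, ¬ (FS G H φ (X ∪ Y)).Reachable (φ x₀) (φ y) ∧
    ∃ Z : Finset β, Z.card ≤ 2 ∧ Disjoint Z (X ∪ Y) ∧
      (FS G H φ (X ∪ Y ∪ Z)).Reachable (φ x₀) (φ y) ∧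
      ∀ b ∈ Z, (FS G H φ (X ∪ Y ∪ Z)).Reachable (φ x₀) (φ b)

lemma key (X Y : Finset β)
    (hcov : ∀ x y : β, H.Adj x y → x ∈ X ∨ y ∈ X) (x₀ y₀ : β) (hy₀ : y₀ ∈ X)
    (hAy₀ : ¬ (FS G H φ (X ∪ Y)).Reachable (φ x₀) (φ y₀)) :
    ∀ n : ℕ, ∀ u : α, ∀ p : (superpose G H φ).Walk u (φ y₀), p.length ≤ n →
    (((FS G H φ (X ∪ Y)).Reachable (φ x₀) u → MergeGoal G H φ X Y x₀) ∧
     (∀ b₀, b₀ ∉ X ∪ Y →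
        (FS G H φ (X ∪ Y ∪ {b₀})).Reachable (φ x₀) (φ b₀) →
        (FS G H φ (X ∪ Y ∪ {b₀})).Reachable (φ x₀) u →
        ¬ (FS G H φ (X ∪ Y)).Reachable (φ x₀) u → MergeGoal G H φ X Y x₀)) := by
  intro n
  induction n with
  | zero =>
    intro u p hlen
    cases p with
    | nil =>
      refine ⟨fun hu => absurd hu hAy₀, fun b₀ hb₀ hRb₀ hu hnAu => ?_⟩
      exact ⟨y₀, hy₀, hAy₀, {b₀}, by simp, by simp only [Finset.disjoint_singleton_left]; exact hb₀,
        hu, by simpa using hRb₀⟩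
    | cons h q => simp [Walk.length_cons] at hlen
  | succ n ih =>
    intro u p hlen
    cases p with
    | nil =>
      refine ⟨fun hu => absurd hu hAy₀, fun b₀ hb₀ hRb₀ hu hnAu => ?_⟩
      exact ⟨y₀, hy₀, hAy₀, {b₀}, by simp, by simp only [Finset.disjoint_singleton_left]; exact hb₀,
        hu, by simpa using hRb₀⟩
    | @cons _ w _ h q =>
      have hqlen : q.length ≤ n := by
        simp only [Walk.length_cons] at hlen; omega
      constructor
      · -- phase 0: u is reachable in FS (X ∪ Y)
        intro hu
        by_cases hAw : (FS G H φ (X ∪ Y)).Reachable (φ x₀) w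
        · exact (ih w q hqlen).1 hAw
        · -- the edge u-w leaves the reachable region
          rcases superpose_adj.1 h with hG | ⟨a, b, hab, rfl, rfl⟩
          · exact absurd (hu.trans (FS_adj_of_G hG).reachable) hAw
          · by_cases haX : a ∈ X
            · by_cases hbXY : b ∈ X ∪ Y
              · exact absurd (hu.trans (FS_adj_of_H (Finset.mem_union_left _ haX) hbXY
                  hab).reachable) hAw
              · -- add b, pass to phase 1
                have hRb : (FS G H φ (X ∪ Y ∪ {b})).Reachable (φ x₀) (φ b) := by
                  refine (FS_reach_mono (Finset.subset_union_left) hu).trans ?_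
                  exact (FS_adj_of_H (by simp [haX]) (by simp) hab).reachable
                exact (ih (φ b) q hqlen).2 b hbXY hRb hRb hAw
            · -- then b ∈ X, and w = φ b; done with Z = {a}
              have hbX : b ∈ X := (hcov a b hab).resolve_left haX
              by_cases haXY : a ∈ X ∪ Y
              · exact absurd (hu.trans (FS_adj_of_H haXY (Finset.mem_union_left _ hbX)
                  hab).reachable) hAw
              · refine ⟨b, hbX, hAw, {a}, by simp,
                  by simp only [Finset.disjoint_singleton_left]; exact haXY, ?_, ?_⟩
                · refine (FS_reach_mono (Finset.subset_union_left) hu).trans ?_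
                  exact (FS_adj_of_H (by simp) (by simp [hbX]) hab).reachable
                · intro c hc
                  simp only [Finset.mem_singleton] at hc
                  subst hc
                  exact FS_reach_mono (Finset.subset_union_left) hu
      · -- phase 1
        intro b₀ hb₀ hRb₀ hu hnAu
        by_cases hAw : (FS G H φ (X ∪ Y)).Reachable (φ x₀) w
        · exact (ih w q hqlen).1 hAw
        · by_cases hRw : (FS G H φ (X ∪ Y ∪ {b₀})).Reachable (φ x₀) w
          · exact (ih w q hqlen).2 b₀ hb₀ hRb₀ hRw hAw
          · rcases superpose_adj.1 h with hG | ⟨a, b, hab, rfl, rfl⟩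
            · exact absurd (hu.trans (FS_adj_of_G hG).reachable) hRw
            · by_cases haX : a ∈ X
              · -- u = φ a with a ∈ X not A-reachable: done with Z = {b₀}
                refine ⟨a, haX, hnAu, {b₀}, by simp,
                  by simp only [Finset.disjoint_singleton_left]; exact hb₀, hu, ?_⟩
                · intro c hc
                  simp only [Finset.mem_singleton] at hc
                  subst hc
                  exact hRb₀
              · have hbX : b ∈ X := (hcov a b hab).resolve_left haX
                by_cases haXY : a ∈ X ∪ Y ∪ {b₀}
                · exact absurd (hu.trans (FS_adj_of_H haXY
                    (by simp [hbX]) hab).reachable) hRw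
                · -- done with Z = {b₀, a}, y = b
                  have hsub : X ∪ Y ∪ {b₀} ⊆ X ∪ Y ∪ {b₀, a} := by
                    intro z hz
                    simp only [Finset.mem_union, Finset.mem_insert, Finset.mem_singleton] at hz ⊢
                    tauto
                  refine ⟨b, hbX, hAw, {b₀, a},
                    (Finset.card_insert_le _ _).trans (by simp), ?_, ?_, ?_⟩
                  · rw [Finset.disjoint_left]
                    intro z hz
                    simp only [Finset.mem_insert, Finset.mem_singleton] at hz
                    rcases hz with rfl | rfl
                    · exact hb₀
                    · exact fun h' => haXY (Finset.mem_union_left _ h')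
                  · refine (FS_reach_mono hsub hu).trans ?_
                    exact (FS_adj_of_H (by simp) (by simp [hbX]) hab).reachable
                  · intro c hc
                    simp only [Finset.mem_insert, Finset.mem_singleton] at hc
                    rcases hc with rfl | rfl
                    · exact FS_reach_mono hsub hRb₀
                    · exact FS_reach_mono hsub hu

lemma outer (X : Finset β) (hcov : ∀ x y : β, H.Adj x y → x ∈ X ∨ y ∈ X)
    (x₀ : β) (hF : (superpose G H φ).Connected) :
    ∀ m : ℕ, ∀ Y : Finset β, Disjoint Y X →
      (∀ b ∈ Y, (FS G H φ (X ∪ Y)).Reachable (φ x₀) (φ b)) →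
      (∃ S : Finset β, S.card ≤ m ∧
        ∀ x ∈ X, ¬ (FS G H φ (X ∪ Y)).Reachable (φ x₀) (φ x) → x ∈ S) →
      Y.card + 2 * m ≤ 2 * (X.card - 1) →
      ∃ Y' : Finset β, Disjoint Y' X ∧ Y'.card ≤ 2 * (X.card - 1) ∧
        ∀ x ∈ X ∪ Y', ∀ y ∈ X ∪ Y', (FS G H φ (X ∪ Y')).Reachable (φ x) (φ y) := by
  intro m
  induction m with
  | zero =>
    intro Y hdisj hinv hS hbud
    obtain ⟨S, hScard, hSmem⟩ := hS
    have hall : ∀ x ∈ X ∪ Y, (FS G H φ (X ∪ Y)).Reachable (φ x₀) (φ x) := by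
      intro x hx
      rcases Finset.mem_union.1 hx with hx | hx
      · by_contra hc
        have := Finset.card_pos.2 ⟨x, hSmem x hx hc⟩
        omega
      · exact hinv x hx
    exact ⟨Y, hdisj, by omega, fun x hx y hy => (hall x hx).symm.trans (hall y hy)⟩
  | succ m ih =>
    intro Y hdisj hinv hS hbud
    obtain ⟨S, hScard, hSmem⟩ := hS
    by_cases hemp : ∀ x ∈ X, (FS G H φ (X ∪ Y)).Reachable (φ x₀) (φ x)
    · have hall : ∀ x ∈ X ∪ Y, (FS G H φ (X ∪ Y)).Reachable (φ x₀) (φ x) := by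
        intro x hx
        rcases Finset.mem_union.1 hx with hx | hx
        · exact hemp x hx
        · exact hinv x hx
      exact ⟨Y, hdisj, by omega, fun x hx y hy => (hall x hx).symm.trans (hall y hy)⟩
    · push_neg at hemp
      obtain ⟨y₀, hy₀X, hy₀⟩ := hemp
      obtain ⟨p⟩ := hF.preconnected (φ x₀) (φ y₀)
      obtain ⟨y, hyX, hynA, Z, hZc, hZd, hyR, hZR⟩ :=
        (key X Y hcov x₀ y₀ hy₀X hy₀ p.length (φ x₀) p le_rfl).1 (Reachable.refl _)
      have hassoc : X ∪ (Y ∪ Z) = X ∪ Y ∪ Z := (Finset.union_assoc X Y Z).symm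
      have hdisj' : Disjoint (Y ∪ Z) X := by
        rw [Finset.disjoint_union_left]
        exact ⟨hdisj, (Finset.disjoint_union_right.1 hZd).1⟩
      have hinv' : ∀ b ∈ Y ∪ Z, (FS G H φ (X ∪ (Y ∪ Z))).Reachable (φ x₀) (φ b) := by
        intro b hb
        rw [hassoc]
        rcases Finset.mem_union.1 hb with hb | hb
        · exact FS_reach_mono Finset.subset_union_left (hinv b hb)
        · exact hZR b hb
      have hyS : y ∈ S := hSmem y hyX hynA
      have hS' : ∃ S' : Finset β, S'.card ≤ m ∧
          ∀ x ∈ X, ¬ (FS G H φ (X ∪ (Y ∪ Z))).Reachable (φ x₀) (φ x) → x ∈ S' := by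
        refine ⟨S.erase y, ?_, ?_⟩
        · have := Finset.card_erase_of_mem hyS
          have := Finset.card_pos.2 ⟨y, hyS⟩
          omega
        · intro x hxX hxn
          rw [hassoc] at hxn
          refine Finset.mem_erase.2 ⟨?_, hSmem x hxX fun hr =>
            hxn (FS_reach_mono Finset.subset_union_left hr)⟩
          rintro rfl
          exact hxn hyR
      have hbud' : (Y ∪ Z).card + 2 * m ≤ 2 * (X.card - 1) := by
        have := Finset.card_union_le Y Z
        omega
      exact ih (Y ∪ Z) hdisj' hinv' hS' hbud'

end Aux

/-- Let `φ : V(H) ↪ V(G)` be injective with `F = G ⊕_φ H` connected and let `X` be a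
vertex cover of `H` of size `t ≥ 1`. Then there is `Y ⊆ V(H) \ X` with `|Y| ≤ 2(t-1)`
such that, for `H' = H[X ∪ Y]` and `ψ = φ|_{X ∪ Y}`, all vertices of `ψ(X ∪ Y)` lie in
the same connected component of `F' = G ⊕_ψ H'`. -/


theorem stmt3 {α β : Type*} [Fintype α] [Fintype β] [DecidableEq β]
    (G : SimpleGraph α) (H : SimpleGraph β) (φ : β ↪ α)
    (hF : (superpose G H φ).Connected)
    (X : Finset β) (hX : ∀ x y : β, H.Adj x y → x ∈ X ∨ y ∈ X)
    (t : ℕ) (ht : X.card = t) (ht1 : 1 ≤ t) :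
    ∃ Y : Finset β, Disjoint Y X ∧ Y.card ≤ 2 * (t - 1) ∧
      ∀ x ∈ X ∪ Y, ∀ y ∈ X ∪ Y,
        (superpose G (restrict H ↑(X ∪ Y)) φ).Reachable (φ x) (φ y) := by
  obtain ⟨x₀, hx₀⟩ : X.Nonempty := Finset.card_pos.1 (by omega)
  have hS : ∃ S : Finset β, S.card ≤ X.card - 1 ∧
      ∀ x ∈ X, ¬ (FS G H φ (X ∪ ∅)).Reachable (φ x₀) (φ x) → x ∈ S := by
    refine ⟨X.erase x₀, le_of_eq (Finset.card_erase_of_mem hx₀), ?_⟩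
    intro x hxX hxn
    refine Finset.mem_erase.2 ⟨?_, hxX⟩
    rintro rfl
    exact hxn (Reachable.refl _)
  have hbud : (∅ : Finset β).card + 2 * (X.card - 1) ≤ 2 * (X.card - 1) := by
    simp
  obtain ⟨Y', hd, hc, hr⟩ := outer X hX x₀ hF (X.card - 1)
    ∅ (Finset.disjoint_empty_left X) (by simp) hS hbud
  exact ⟨Y', hd, by rw [← ht]; exact hc, hr⟩
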